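/- For integers a, ℓ, k ≥ 2, consider a 2-colouring c of the set T = {ℓ, k, ℓk, a, ℓa, ka, ℓka, ℓ²a, ℓ²ka}. If c(ℓ) ≠ c(k), then there exist x, y, z ∈ T with c(x) = c(y) = c(z), x·y = z, and a divides z. -/
import Mathlib

set_option maxHeartbeats 2000000


theorem stmt_0 (a l k : ℕ) (ha : 2 ≤ a) (hl : 2 ≤ l) (hk : 2 ≤ k)
    (c : ℕ → Bool) (hc : c l ≠ c k) :
    ∃ x ∈ ({l, k, l*k, a, l*a, k*a, l*k*a, l^2*a, l^2*k*a} : Finset ℕ),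
    ∃ y ∈ ({l, k, l*k, a, l*a, k*a, l*k*a, l^2*a, l^2*k*a} : Finset ℕ),
    ∃ z ∈ ({l, k, l*k, a, l*a, k*a, l*k*a, l^2*a, l^2*k*a} : Finset ℕ),
      c x = c y ∧ c y = c z ∧ x * y = z ∧ a ∣ z := by
  have cover : ∀ x, c x = c l ∨ c x = c k := fun x => by
    revert hc; cases c x <;> cases c l <;> cases c k <;> simp
  rcases cover a with hA | hA
  · rcases cover (l*a) with h1 | h1
    · exact ⟨l, by simp, a, by simp, l*a, by simp, by simp_all, by simp_all,
        by ring, ⟨l, by ring⟩⟩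
    · rcases cover (l*k*a) with h2 | h2
      · rcases cover (l^2*k*a) with h3 | h3
        · exact ⟨l, by simp, l*k*a, by simp, l^2*k*a, by simp, by simp_all,
            by simp_all, by ring, ⟨l^2*k, by ring⟩⟩
        · rcases cover (l^2*a) with h4 | h4
          · rcases cover (l*k) with h5 | h5
            · exact ⟨l*k, by simp, a, by simp, l*k*a, by simp, by simp_all,
                by simp_all, by ring, ⟨l*k, by ring⟩⟩
            · exact ⟨l*k, by simp, l*a, by simp, l^2*k*a, by simp, by simp_all,
                by simp_all, by ring, ⟨l^2*k, by ring⟩⟩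
          · exact ⟨k, by simp, l^2*a, by simp, l^2*k*a, by simp, by simp_all,
              by simp_all, by ring, ⟨l^2*k, by ring⟩⟩
      · exact ⟨k, by simp, l*a, by simp, l*k*a, by simp, by simp_all,
          by simp_all, by ring, ⟨l*k, by ring⟩⟩
  · rcases cover (k*a) with h1 | h1
    · rcases cover (l*k*a) with h2 | h2
      · exact ⟨l, by simp, k*a, by simp, l*k*a, by simp, by simp_all,
          by simp_all, by ring, ⟨l*k, by ring⟩⟩
      · rcases cover (l*k) with h3 | h3
        · rcases cover (l*a) with h4 | h4
          · rcases cover (l^2*k*a) with h5 | h5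
            · exact ⟨l*k, by simp, l*a, by simp, l^2*k*a, by simp, by simp_all,
                by simp_all, by ring, ⟨l^2*k, by ring⟩⟩
            · rcases cover (l^2*a) with h6 | h6
              · exact ⟨l, by simp, l*a, by simp, l^2*a, by simp, by simp_all,
                  by simp_all, by ring, ⟨l^2, by ring⟩⟩
              · exact ⟨k, by simp, l^2*a, by simp, l^2*k*a, by simp, by simp_all,
                  by simp_all, by ring, ⟨l^2*k, by ring⟩⟩
          · exact ⟨k, by simp, l*a, by simp, l*k*a, by simp, by simp_all,
              by simp_all, by ring, ⟨l*k, by ring⟩⟩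
        · exact ⟨l*k, by simp, a, by simp, l*k*a, by simp, by simp_all,
            by simp_all, by ring, ⟨l*k, by ring⟩⟩
    · exact ⟨k, by simp, a, by simp, k*a, by simp, by simp_all,
        by simp_all, by ring, ⟨k, by ring⟩⟩
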